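/- Let k be a field and s > t ≥ 3, x > y ≥ 3 integers. Let X = J_s ⊕ J_t ⊕ J_1 and Y = J_x ⊕ J_y ⊕ J_2, and let C : X → Y be the k[T]-linear map with components: multiplication by T^{x−2} from J_s to J_x; multiplication by T^{y−2} from J_s to J_y and from J_t to J_y; the canonical reduction map from J_t to J_2; multiplication by T from J_1 to J_2; and zero in all other components. Then T²∘C = 0 and the triple (X, Y, C) is indecomposable. (In the paper this is the family with (s, t) = (m, k) for 3 ≤ k ≤ m−1 and (x, y) = (n, k′) for 3 ≤ k′ ≤ n−1.) -/

import Mathlib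

open Polynomial

/-- `J K a` is the `K[T]`-module `K[T]/(T^a)` (with `T` the polynomial variable `X`). -/
abbrev J (K : Type*) [Field K] (a : ℕ) : Type _ :=
  Polynomial K ⧸ Ideal.span {(X : Polynomial K) ^ a}

/-- Multiplication by `T^e` as a `K[T]`-linear map `J_a → J_b`; it is well defined
when `b ≤ e + a`, and we set it to `0` otherwise. -/
noncomputable def mulTpow (K : Type*) [Field K] (a b e : ℕ) :
    J K a →ₗ[Polynomial K] J K b :=
  if h : b ≤ e + a then
    Submodule.liftQ (Ideal.span {(X : Polynomial K) ^ a})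
      ((Ideal.span {(X : Polynomial K) ^ b}).mkQ ∘ₗ
        ((X : Polynomial K) ^ e • (LinearMap.id : Polynomial K →ₗ[Polynomial K] Polynomial K)))
      (by
        refine Submodule.span_le.mpr ?_
        intro x hx
        rw [Set.mem_singleton_iff] at hx
        subst hx
        simp only [SetLike.mem_coe, LinearMap.mem_ker, LinearMap.comp_apply,
          LinearMap.smul_apply, LinearMap.id_apply, Submodule.mkQ_apply,
          Submodule.Quotient.mk_eq_zero, smul_eq_mul]
        exact Ideal.mem_span_singleton.mpr (by
          rw [← pow_add]; exact pow_dvd_pow X h))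
  else 0

/-- A triple `(M, N, C)` is indecomposable if `M ⊕ N ≠ 0` and the only idempotent
endomorphism pairs `(F, G)` (i.e. `G ∘ C = C ∘ F`, `F² = F`, `G² = G`) are `(0, 0)` and
`(id, id)`. -/
def TripleIndecomposable {K : Type*} [Field K] {M N : Type*}
    [AddCommGroup M] [Module (Polynomial K) M]
    [AddCommGroup N] [Module (Polynomial K) N] (C : M →ₗ[Polynomial K] N) : Prop :=
  (Nontrivial M ∨ Nontrivial N) ∧
  ∀ (F : M →ₗ[Polynomial K] M) (G : N →ₗ[Polynomial K] N),
    G ∘ₗ C = C ∘ₗ F → F ∘ₗ F = F → G ∘ₗ G = G →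
      (F = 0 ∧ G = 0) ∨ (F = LinearMap.id ∧ G = LinearMap.id)

namespace TripleAux

variable {K : Type*} [Field K]

noncomputable def qmk (K : Type*) [Field K] (a : ℕ) (p : Polynomial K) : J K a :=
  Submodule.Quotient.mk p

lemma qmk_eq_iff {a : ℕ} {p q : Polynomial K} :
    qmk K a p = qmk K a q ↔ (X : Polynomial K) ^ a ∣ p - q := by
  rw [qmk, qmk, Submodule.Quotient.eq]
  exact Ideal.mem_span_singleton

lemma qmk_zero {a : ℕ} : qmk K a 0 = 0 := rfl

lemma qmk_eq_zero {a : ℕ} {p : Polynomial K} :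
    qmk K a p = 0 ↔ (X : Polynomial K) ^ a ∣ p := by
  rw [show (0 : J K a) = qmk K a 0 from rfl, qmk_eq_iff, sub_zero]

lemma qmk_add {a : ℕ} (p q : Polynomial K) : qmk K a p + qmk K a q = qmk K a (p + q) :=
  (Submodule.Quotient.mk_add _).symm

lemma smul_qmk {a : ℕ} (p q : Polynomial K) : p • qmk K a q = qmk K a (p * q) := by
  rw [qmk, qmk, ← Submodule.Quotient.mk_smul, smul_eq_mul]

lemma coeff_eq_zero_of_dvd {m i : ℕ} {P : Polynomial K}
    (h : (X : Polynomial K) ^ m ∣ P) (hi : i < m) : P.coeff i = 0 := by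
  obtain ⟨c, rfl⟩ := h
  rw [mul_comm, coeff_mul_X_pow', if_neg (by omega)]

lemma cXe (p : Polynomial K) {n i : ℕ} (j : ℕ) (h : i = n + j) :
    ((X : Polynomial K) ^ n * p).coeff i = p.coeff j := by
  subst h
  rw [mul_comm, coeff_mul_X_pow', if_pos (by omega), Nat.add_sub_cancel_left]

lemma cXz (p : Polynomial K) {n i : ℕ} (h : i < n) :
    ((X : Polynomial K) ^ n * p).coeff i = 0 := by
  rw [mul_comm, coeff_mul_X_pow', if_neg (by omega)]

lemma cXe' (p : Polynomial K) {n i : ℕ} (j : ℕ) (h : i = n + j) :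
    (p * (X : Polynomial K) ^ n).coeff i = p.coeff j := by
  rw [mul_comm]; exact cXe p j h

lemma cXz' (p : Polynomial K) {n i : ℕ} (h : i < n) :
    (p * (X : Polynomial K) ^ n).coeff i = 0 := by
  rw [mul_comm]; exact cXz p h

lemma qmk_coeff_eq {a i : ℕ} (hi : i < a) {p q : Polynomial K}
    (h : qmk K a p = qmk K a q) : p.coeff i = q.coeff i := by
  rw [qmk_eq_iff] at h
  have := coeff_eq_zero_of_dvd h hi
  rw [coeff_sub, sub_eq_zero] at this
  exact this

lemma mulTpow_qmk (a b e : ℕ) (h : b ≤ e + a) (p : Polynomial K) :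
    mulTpow K a b e (qmk K a p) = qmk K b (X ^ e * p) := by
  rw [mulTpow, dif_pos h, qmk, Submodule.liftQ_apply]
  simp only [LinearMap.comp_apply, LinearMap.smul_apply, LinearMap.id_apply,
    Submodule.mkQ_apply, smul_eq_mul]
  rfl

lemma qmk_eq_X_smul {a : ℕ} {p : Polynomial K} (h : p.coeff 0 = 0) :
    qmk K a p = (X : Polynomial K) • qmk K a p.divX := by
  rw [smul_qmk]
  congr 1
  conv_lhs => rw [← X_mul_divX_add p, h, map_zero, add_zero]

lemma trip_decomp {a b c : ℕ} (v : J K a × J K b × J K c) :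
    ∃ p q r : Polynomial K, v = (qmk K a p, qmk K b q, qmk K c r) := by
  obtain ⟨p, hp⟩ := Submodule.Quotient.mk_surjective _ v.1
  obtain ⟨q, hq⟩ := Submodule.Quotient.mk_surjective _ v.2.1
  obtain ⟨r, hr⟩ := Submodule.Quotient.mk_surjective _ v.2.2
  exact ⟨p, q, r, by rw [show v = (v.1, v.2.1, v.2.2) from rfl, ← hp, ← hq, ← hr]; rfl⟩

lemma trip_eq_smul {a b c : ℕ} (p q r : Polynomial K) :
    ((qmk K a p, qmk K b q, qmk K c r) : J K a × J K b × J K c)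
      = p • (qmk K a 1, 0, 0) + q • (0, qmk K b 1, 0) + r • (0, 0, qmk K c 1) := by
  simp only [Prod.smul_mk, Prod.mk_add_mk, smul_zero, smul_qmk, mul_one,
    add_zero, zero_add]

lemma apply_reps {a b c d e f : ℕ}
    (F : (J K a × J K b × J K c) →ₗ[Polynomial K] (J K d × J K e × J K f))
    {m11 m21 m31 m12 m22 m32 m13 m23 m33 : Polynomial K}
    (h1 : F (qmk K a 1, 0, 0) = (qmk K d m11, qmk K e m21, qmk K f m31))
    (h2 : F (0, qmk K b 1, 0) = (qmk K d m12, qmk K e m22, qmk K f m32))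
    (h3 : F (0, 0, qmk K c 1) = (qmk K d m13, qmk K e m23, qmk K f m33))
    (p q r : Polynomial K) :
    F (qmk K a p, qmk K b q, qmk K c r) =
      (qmk K d (p * m11 + q * m12 + r * m13),
       qmk K e (p * m21 + q * m22 + r * m23),
       qmk K f (p * m31 + q * m32 + r * m33)) := by
  rw [trip_eq_smul, map_add, map_add, map_smul, map_smul, map_smul, h1, h2, h3]
  simp only [Prod.smul_mk, Prod.mk_add_mk, smul_qmk, qmk_add]

end TripleAux
namespace TripleAux

variable {K : Type*} [Field K]

lemma trip_X_factor {a b c : ℕ} {p q r : Polynomial K}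
    (hp : p.coeff 0 = 0) (hq : q.coeff 0 = 0) (hr : r.coeff 0 = 0) :
    ∃ w : J K a × J K b × J K c,
      ((qmk K a p, qmk K b q, qmk K c r) : J K a × J K b × J K c)
        = (X : Polynomial K) • w := by
  refine ⟨(qmk K a p.divX, qmk K b q.divX, qmk K c r.divX), ?_⟩
  rw [Prod.smul_mk, Prod.smul_mk, qmk_eq_X_smul hp, qmk_eq_X_smul hq, qmk_eq_X_smul hr]

lemma trip_pow_smul_zero {a b c n : ℕ} (hb : b ≤ n) (hc : c ≤ n) (ha : a ≤ n)
    (w : J K a × J K b × J K c) : (X : Polynomial K) ^ n • w = 0 := by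
  obtain ⟨p, q, r, rfl⟩ := trip_decomp w
  rw [Prod.smul_mk, Prod.smul_mk, smul_qmk, smul_qmk, smul_qmk]
  refine Prod.ext ?_ (Prod.ext ?_ ?_)
  · show qmk K a (X ^ n * p) = 0
    exact qmk_eq_zero.mpr ((pow_dvd_pow X ha).mul_right _)
  · show qmk K b (X ^ n * q) = 0
    exact qmk_eq_zero.mpr ((pow_dvd_pow X hb).mul_right _)
  · show qmk K c (X ^ n * r) = 0
    exact qmk_eq_zero.mpr ((pow_dvd_pow X hc).mul_right _)
lemma idem_zero {a b c : ℕ} (hb : b ≤ a) (hc : c ≤ a)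
    (F : (J K a × J K b × J K c) →ₗ[Polynomial K] (J K a × J K b × J K c))
    (hFF : F ∘ₗ F = F)
    (h : ∀ v, ∃ w, F v = (X : Polynomial K) • w) : F = 0 := by
  have key : ∀ n : ℕ, ∀ v, ∃ w, F v = (X : Polynomial K) ^ n • w := by
    intro n
    induction n with
    | zero => exact fun v => ⟨F v, by rw [pow_zero, one_smul]⟩
    | succ n ih =>
      intro v
      obtain ⟨w, hw⟩ := ih v
      have hFv : F (F v) = F v := by
        have := LinearMap.ext_iff.mp hFF v
        simpa only [LinearMap.comp_apply] using this
      obtain ⟨w', hw'⟩ := h w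
      refine ⟨w', ?_⟩
      rw [← hFv, hw, map_smul, hw', smul_smul, ← pow_succ]
  apply LinearMap.ext
  intro v
  obtain ⟨w, hw⟩ := key a v
  rw [LinearMap.zero_apply, hw, trip_pow_smul_zero hb hc le_rfl]

end TripleAux
namespace TripleAux

variable {K : Type*} [Field K]

noncomputable def bigC (K : Type*) [Field K] (s t xx y : ℕ) :
    (J K s × J K t × J K 1) →ₗ[Polynomial K] (J K xx × J K y × J K 2) :=
  LinearMap.prod
    ((mulTpow K s xx (xx - 2)).coprod
      ((0 : J K t →ₗ[Polynomial K] J K xx).coprod (0 : J K 1 →ₗ[Polynomial K] J K xx)))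
    (LinearMap.prod
      ((mulTpow K s y (y - 2)).coprod
        ((mulTpow K t y (y - 2)).coprod (0 : J K 1 →ₗ[Polynomial K] J K y)))
      ((0 : J K s →ₗ[Polynomial K] J K 2).coprod
        ((mulTpow K t 2 0).coprod (mulTpow K 1 2 1))))

variable {s t xx y : ℕ}

lemma hCE1 (hts : t < s) (ht : 3 ≤ t) (hyx : y < xx) (hy : 3 ≤ y) :
    bigC K s t xx y (qmk K s 1, 0, 0)
      = (qmk K xx (X ^ (xx - 2) * 1), qmk K y (X ^ (y - 2) * 1), qmk K 2 0) := by
  simp only [bigC, LinearMap.prod_apply, Pi.prod, Function.prod, LinearMap.coprod_apply, map_zero,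
    LinearMap.zero_apply, add_zero, zero_add,
    mulTpow_qmk s xx (xx - 2) (by omega), mulTpow_qmk s y (y - 2) (by omega), qmk_zero]

lemma hCE2 (hts : t < s) (ht : 3 ≤ t) (hyx : y < xx) (hy : 3 ≤ y) :
    bigC K s t xx y (0, qmk K t 1, 0)
      = (qmk K xx 0, qmk K y (X ^ (y - 2) * 1), qmk K 2 (X ^ 0 * 1)) := by
  simp only [bigC, LinearMap.prod_apply, Pi.prod, Function.prod, LinearMap.coprod_apply, map_zero,
    LinearMap.zero_apply, add_zero, zero_add,
    mulTpow_qmk t y (y - 2) (by omega), mulTpow_qmk t 2 0 (by omega), qmk_zero]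

lemma hCE3 (hts : t < s) (ht : 3 ≤ t) (hyx : y < xx) (hy : 3 ≤ y) :
    bigC K s t xx y (0, 0, qmk K 1 1)
      = (qmk K xx 0, qmk K y 0, qmk K 2 (X ^ 1 * 1)) := by
  simp only [bigC, LinearMap.prod_apply, Pi.prod, Function.prod, LinearMap.coprod_apply, map_zero,
    LinearMap.zero_apply, add_zero, zero_add,
    mulTpow_qmk 1 2 1 (by omega), qmk_zero]

lemma part1 (hts : t < s) (ht : 3 ≤ t) (hyx : y < xx) (hy : 3 ≤ y)
    (v : J K s × J K t × J K 1) :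
    ((X : Polynomial K) ^ 2) • bigC K s t xx y v = 0 := by
  obtain ⟨p, q, r, rfl⟩ := trip_decomp v
  rw [apply_reps (bigC K s t xx y) (hCE1 hts ht hyx hy) (hCE2 hts ht hyx hy)
    (hCE3 hts ht hyx hy)]
  rw [Prod.smul_mk, Prod.smul_mk, smul_qmk, smul_qmk, smul_qmk]
  refine Prod.ext ?_ (Prod.ext ?_ ?_)
  · show qmk K xx _ = 0
    rw [qmk_eq_zero]
    refine ⟨p, ?_⟩
    rw [show (X : Polynomial K) ^ xx = X ^ 2 * X ^ (xx - 2) by rw [← pow_add]; congr 1; omega]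
    ring
  · show qmk K y _ = 0
    rw [qmk_eq_zero]
    refine ⟨p + q, ?_⟩
    rw [show (X : Polynomial K) ^ y = X ^ 2 * X ^ (y - 2) by rw [← pow_add]; congr 1; omega]
    ring
  · show qmk K 2 _ = 0
    rw [qmk_eq_zero]
    exact Dvd.intro _ rfl

end TripleAux
namespace TripleAux

variable {K : Type*} [Field K]

lemma smul_trip {a b c : ℕ} (m p q r : Polynomial K) :
    m • ((qmk K a p, qmk K b q, qmk K c r) : J K a × J K b × J K c)
      = (qmk K a (m * p), qmk K b (m * q), qmk K c (m * r)) := by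
  rw [Prod.smul_mk, Prod.smul_mk, smul_qmk, smul_qmk, smul_qmk]

/-- If the generator of the middle (resp. last) factor is annihilated by `X^n`,
so is the image under a linear endomorphism; component-wise divisibilities. -/
lemma torsion_fact {a b c d e f : ℕ}
    (F : (J K a × J K b × J K c) →ₗ[Polynomial K] (J K d × J K e × J K f))
    {v : J K a × J K b × J K c} {p q r : Polynomial K} (n : ℕ)
    (hv : F v = (qmk K d p, qmk K e q, qmk K f r))
    (hz : (X : Polynomial K) ^ n • v = 0) :
    (X : Polynomial K) ^ d ∣ X ^ n * p ∧ (X : Polynomial K) ^ e ∣ X ^ n * q ∧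
      (X : Polynomial K) ^ f ∣ X ^ n * r := by
  have h : (qmk K d (X ^ n * p), qmk K e (X ^ n * q), qmk K f (X ^ n * r))
      = (0 : J K d × J K e × J K f) := by
    rw [← smul_trip, ← hv, ← map_smul, hz, map_zero]
  rw [Prod.mk.injEq, Prod.mk.injEq] at h
  exact ⟨qmk_eq_zero.mp h.1, qmk_eq_zero.mp h.2.1, qmk_eq_zero.mp h.2.2⟩

lemma gen2_torsion {a b c : ℕ} :
    (X : Polynomial K) ^ b • ((0, qmk K b 1, 0) : J K a × J K b × J K c) = 0 := by
  rw [show ((0, qmk K b 1, 0) : J K a × J K b × J K c)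
    = (qmk K a 0, qmk K b 1, qmk K c 0) from rfl, smul_trip]
  refine Prod.ext ?_ (Prod.ext ?_ ?_)
  · show qmk K a (X ^ b * 0) = 0
    rw [mul_zero]; rfl
  · show qmk K b (X ^ b * 1) = 0
    exact qmk_eq_zero.mpr ⟨1, by ring⟩
  · show qmk K c (X ^ b * 0) = 0
    rw [mul_zero]; rfl

lemma gen3_torsion {a b c : ℕ} :
    (X : Polynomial K) ^ c • ((0, 0, qmk K c 1) : J K a × J K b × J K c) = 0 := by
  rw [show ((0, 0, qmk K c 1) : J K a × J K b × J K c)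
    = (qmk K a 0, qmk K b 0, qmk K c 1) from rfl, smul_trip]
  refine Prod.ext ?_ (Prod.ext ?_ ?_)
  · show qmk K a (X ^ c * 0) = 0
    rw [mul_zero]; rfl
  · show qmk K b (X ^ c * 0) = 0
    rw [mul_zero]; rfl
  · show qmk K c (X ^ c * 1) = 0
    exact qmk_eq_zero.mpr ⟨1, by ring⟩

variable {s t xx y : ℕ}

lemma main_zero (hts : t < s) (ht : 3 ≤ t) (hyx : y < xx) (hy : 3 ≤ y)
    (F : (J K s × J K t × J K 1) →ₗ[Polynomial K] (J K s × J K t × J K 1))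
    (G : (J K xx × J K y × J K 2) →ₗ[Polynomial K] (J K xx × J K y × J K 2))
    (hGC : G ∘ₗ bigC K s t xx y = bigC K s t xx y ∘ₗ F)
    (hFF : F ∘ₗ F = F) (hGG : G ∘ₗ G = G)
    (hα : ∀ r₀ : Polynomial K, (F (0, 0, qmk K 1 1)).2.2 = qmk K 1 r₀ → r₀.coeff 0 = 0) :
    F = 0 ∧ G = 0 := by
  obtain ⟨a11, a21, a31, hF1⟩ := trip_decomp (F (qmk K s 1, 0, 0))
  obtain ⟨a12, a22, a32, hF2⟩ := trip_decomp (F (0, qmk K t 1, 0))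
  obtain ⟨a13, a23, a33, hF3⟩ := trip_decomp (F (0, 0, qmk K 1 1))
  obtain ⟨b11, b21, b31, hG1⟩ := trip_decomp (G (qmk K xx 1, 0, 0))
  obtain ⟨b12, b22, b32, hG2⟩ := trip_decomp (G (0, qmk K y 1, 0))
  obtain ⟨b13, b23, b33, hG3⟩ := trip_decomp (G (0, 0, qmk K 2 1))
  have hα3 : a33.coeff 0 = 0 := hα a33 (by rw [hF3])
  -- torsion facts
  obtain ⟨hT12, hT22, hT32⟩ := torsion_fact F t hF2 gen2_torsion
  obtain ⟨hT13, hT23, hT33⟩ := torsion_fact F 1 hF3 gen3_torsion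
  obtain ⟨hU12, hU22, hU32⟩ := torsion_fact G y hG2 gen2_torsion
  obtain ⟨hU13, hU23, hU33⟩ := torsion_fact G 2 hG3 gen3_torsion
  have ha12_0 : a12.coeff 0 = 0 := by
    have h := coeff_eq_zero_of_dvd hT12 hts
    rwa [cXe a12 0 (by omega)] at h
  have ha13_0 : a13.coeff 0 = 0 := by
    have h := coeff_eq_zero_of_dvd hT13 (show 1 < s by omega)
    rwa [cXe a13 0 (by omega)] at h
  have ha13_1 : a13.coeff 1 = 0 := by
    have h := coeff_eq_zero_of_dvd hT13 (show 2 < s by omega)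
    rwa [cXe a13 1 (by omega)] at h
  have ha23_0 : a23.coeff 0 = 0 := by
    have h := coeff_eq_zero_of_dvd hT23 (show 1 < t by omega)
    rwa [cXe a23 0 (by omega)] at h
  have ha23_1 : a23.coeff 1 = 0 := by
    have h := coeff_eq_zero_of_dvd hT23 (show 2 < t by omega)
    rwa [cXe a23 1 (by omega)] at h
  have hb12_0 : b12.coeff 0 = 0 := by
    have h := coeff_eq_zero_of_dvd hU12 hyx
    rwa [cXe b12 0 (by omega)] at h
  have hb13_0 : b13.coeff 0 = 0 := by
    have h := coeff_eq_zero_of_dvd hU13 (show 2 < xx by omega)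
    rwa [cXe b13 0 (by omega)] at h
  have hb23_0 : b23.coeff 0 = 0 := by
    have h := coeff_eq_zero_of_dvd hU23 (show 2 < y by omega)
    rwa [cXe b23 0 (by omega)] at h
  -- the intertwining equations
  have h1 := LinearMap.ext_iff.mp hGC (qmk K s 1, 0, 0)
  have h2 := LinearMap.ext_iff.mp hGC (0, qmk K t 1, 0)
  have h3 := LinearMap.ext_iff.mp hGC (0, 0, qmk K 1 1)
  simp only [LinearMap.comp_apply] at h1 h2 h3
  rw [hCE1 hts ht hyx hy, hF1, apply_reps G hG1 hG2 hG3,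
    apply_reps (bigC K s t xx y) (hCE1 hts ht hyx hy) (hCE2 hts ht hyx hy)
      (hCE3 hts ht hyx hy)] at h1
  rw [hCE2 hts ht hyx hy, hF2, apply_reps G hG1 hG2 hG3,
    apply_reps (bigC K s t xx y) (hCE1 hts ht hyx hy) (hCE2 hts ht hyx hy)
      (hCE3 hts ht hyx hy)] at h2
  rw [hCE3 hts ht hyx hy, hF3, apply_reps G hG1 hG2 hG3,
    apply_reps (bigC K s t xx y) (hCE1 hts ht hyx hy) (hCE2 hts ht hyx hy)
      (hCE3 hts ht hyx hy)] at h3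
  simp only [mul_one, one_mul, mul_zero, zero_mul, add_zero, zero_add, pow_zero,
    Prod.mk.injEq] at h1 h2 h3
  obtain ⟨h1x, h1y, h1t⟩ := h1
  obtain ⟨h2x, h2y, h2t⟩ := h2
  obtain ⟨h3x, h3y, h3t⟩ := h3
  -- coefficient extractions
  have d1t : a21.coeff 0 = 0 := by
    have h := qmk_coeff_eq (show 0 < 2 by omega) h1t
    rw [coeff_add, cXz b31 (by omega), cXz b32 (by omega), coeff_add,
      cXz' a31 (by omega), add_zero, add_zero] at h
    exact h.symm
  have hb13x : b13.coeff (xx - 2) = 0 := by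
    have h := qmk_coeff_eq (show xx - 1 < xx by omega) h3x
    rwa [cXe b13 (xx - 2) (by omega), cXe' a13 1 (by omega), ha13_1] at h
  have hb12x : b12.coeff (xx - y) = 0 := by
    have h := qmk_coeff_eq (show xx - 2 < xx by omega) h2x
    rwa [coeff_add, cXe b12 (xx - y) (by omega), hb13x, add_zero,
      cXe' a12 0 (by omega), ha12_0] at h
  have dβ1 : b11.coeff 0 = a11.coeff 0 := by
    have h := qmk_coeff_eq (show xx - 2 < xx by omega) h1x
    rwa [coeff_add, cXe b11 0 (by omega), cXe b12 (xx - y) (by omega), hb12x, add_zero,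
      cXe' a11 0 (by omega)] at h
  have db23 : b23.coeff (y - 2) = 0 := by
    have h := qmk_coeff_eq (show y - 1 < y by omega) h3y
    rwa [cXe b23 (y - 2) (by omega), coeff_add, cXe' a13 1 (by omega),
      cXe' a23 1 (by omega), ha13_1, ha23_1, add_zero] at h
  have dβ2α2 : b22.coeff 0 = a22.coeff 0 := by
    have h := qmk_coeff_eq (show y - 2 < y by omega) h2y
    rwa [coeff_add, cXe b22 0 (by omega), db23, add_zero, coeff_add,
      cXe' a12 0 (by omega), cXe' a22 0 (by omega), ha12_0, zero_add] at h
  have dβ2α1 : b22.coeff 0 = a11.coeff 0 := by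
    have h := qmk_coeff_eq (show y - 2 < y by omega) h1y
    rwa [coeff_add, cXz b21 (by omega), cXe b22 0 (by omega), zero_add, coeff_add,
      cXe' a11 0 (by omega), cXe' a21 0 (by omega), d1t, add_zero] at h
  have dβ3α2 : b33.coeff 0 = a22.coeff 0 := by
    have h := qmk_coeff_eq (show 0 < 2 by omega) h2t
    rwa [coeff_add, cXz b32 (by omega), zero_add, coeff_add, cXz' a32 (by omega),
      add_zero] at h
  have dβ3α3 : b33.coeff 0 = a33.coeff 0 := by
    have h := qmk_coeff_eq (show 1 < 2 by omega) h3t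
    rwa [cXe b33 0 (by omega), coeff_add, cXe' a33 0 (by omega), ha23_1, zero_add] at h
  -- all diagonal constants vanish
  have fa22 : a22.coeff 0 = 0 := by rw [← dβ3α2, dβ3α3, hα3]
  have fb33 : b33.coeff 0 = 0 := by rw [dβ3α3, hα3]
  have fb22 : b22.coeff 0 = 0 := by rw [dβ2α2, fa22]
  have fa11 : a11.coeff 0 = 0 := by rw [← dβ2α1, fb22]
  have fb11 : b11.coeff 0 = 0 := by rw [dβ1, fa11]
  -- idempotency equations
  have hFe1 := LinearMap.ext_iff.mp hFF (qmk K s 1, 0, 0)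
  have hFe2 := LinearMap.ext_iff.mp hFF (0, qmk K t 1, 0)
  have hGf1 := LinearMap.ext_iff.mp hGG (qmk K xx 1, 0, 0)
  have hGf2 := LinearMap.ext_iff.mp hGG (0, qmk K y 1, 0)
  simp only [LinearMap.comp_apply] at hFe1 hFe2 hGf1 hGf2
  rw [hF1, apply_reps F hF1 hF2 hF3, Prod.mk.injEq, Prod.mk.injEq] at hFe1
  rw [hF2, apply_reps F hF1 hF2 hF3, Prod.mk.injEq, Prod.mk.injEq] at hFe2
  rw [hG1, apply_reps G hG1 hG2 hG3, Prod.mk.injEq, Prod.mk.injEq] at hGf1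
  rw [hG2, apply_reps G hG1 hG2 hG3, Prod.mk.injEq, Prod.mk.injEq] at hGf2
  have fa31 : a31.coeff 0 = 0 := by
    have h := qmk_coeff_eq (show 0 < 1 by omega) hFe1.2.2
    rw [coeff_add, coeff_add, mul_coeff_zero, mul_coeff_zero, mul_coeff_zero,
      fa11, d1t, hα3, zero_mul, zero_mul, mul_zero, add_zero, add_zero] at h
    exact h.symm
  have fa32 : a32.coeff 0 = 0 := by
    have h := qmk_coeff_eq (show 0 < 1 by omega) hFe2.2.2
    rw [coeff_add, coeff_add, mul_coeff_zero, mul_coeff_zero, mul_coeff_zero,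
      ha12_0, fa22, hα3, zero_mul, zero_mul, mul_zero, add_zero, add_zero] at h
    exact h.symm
  have fb21 : b21.coeff 0 = 0 := by
    have h := qmk_coeff_eq (show 0 < y by omega) hGf1.2.1
    rw [coeff_add, coeff_add, mul_coeff_zero, mul_coeff_zero, mul_coeff_zero,
      fb11, fb22, hb23_0, zero_mul, mul_zero, mul_zero, add_zero, add_zero] at h
    exact h.symm
  have fb31 : b31.coeff 0 = 0 := by
    have h := qmk_coeff_eq (show 0 < 2 by omega) hGf1.2.2
    rw [coeff_add, coeff_add, mul_coeff_zero, mul_coeff_zero, mul_coeff_zero,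
      fb11, fb21, fb33, zero_mul, zero_mul, mul_zero, add_zero, add_zero] at h
    exact h.symm
  have fb32 : b32.coeff 0 = 0 := by
    have h := qmk_coeff_eq (show 0 < 2 by omega) hGf2.2.2
    rw [coeff_add, coeff_add, mul_coeff_zero, mul_coeff_zero, mul_coeff_zero,
      hb12_0, fb22, fb33, zero_mul, zero_mul, mul_zero, add_zero, add_zero] at h
    exact h.symm
  -- conclude
  constructor
  · refine idem_zero (by omega) (by omega) F hFF ?_
    intro v
    obtain ⟨p, q, r, rfl⟩ := trip_decomp v
    rw [apply_reps F hF1 hF2 hF3]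
    refine trip_X_factor ?_ ?_ ?_ <;>
      simp [coeff_add, mul_coeff_zero, fa11, ha12_0, ha13_0, d1t, fa22, ha23_0,
        fa31, fa32, hα3]
  · refine idem_zero (by omega) (by omega) G hGG ?_
    intro v
    obtain ⟨p, q, r, rfl⟩ := trip_decomp v
    rw [apply_reps G hG1 hG2 hG3]
    refine trip_X_factor ?_ ?_ ?_ <;>
      simp [coeff_add, mul_coeff_zero, fb11, hb12_0, hb13_0, fb21, fb22, hb23_0,
        fb31, fb32, fb33]

end TripleAux

set_option maxHeartbeats 2000000 in
open TripleAux in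
/-- For `s > t ≥ 3`, `xx > y ≥ 3`, the map `C : J_s ⊕ J_t ⊕ J_1 → J_xx ⊕ J_y ⊕ J_2`
with components `T^{xx-2} : J_s → J_xx`, `T^{y-2} : J_s → J_y`, `T^{y-2} : J_t → J_y`,
the canonical reduction `J_t → J_2`, `T : J_1 → J_2`, and zero in all other components,
satisfies `T² ∘ C = 0`, and the triple `(J_s ⊕ J_t ⊕ J_1, J_xx ⊕ J_y ⊕ J_2, C)` is
indecomposable. -/
theorem triple_3x3_indecomposable (K : Type*) [Field K] (s t xx y : ℕ)
    (hts : t < s) (ht : 3 ≤ t) (hyx : y < xx) (hy : 3 ≤ y) :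
    (∀ v, ((X : Polynomial K) ^ 2) •
      (LinearMap.prod
        ((mulTpow K s xx (xx - 2)).coprod
          ((0 : J K t →ₗ[Polynomial K] J K xx).coprod (0 : J K 1 →ₗ[Polynomial K] J K xx)))
        (LinearMap.prod
          ((mulTpow K s y (y - 2)).coprod
            ((mulTpow K t y (y - 2)).coprod (0 : J K 1 →ₗ[Polynomial K] J K y)))
          ((0 : J K s →ₗ[Polynomial K] J K 2).coprod
            ((mulTpow K t 2 0).coprod (mulTpow K 1 2 1))))) v = 0) ∧
    TripleIndecomposable
      (LinearMap.prod
        ((mulTpow K s xx (xx - 2)).coprod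
          ((0 : J K t →ₗ[Polynomial K] J K xx).coprod (0 : J K 1 →ₗ[Polynomial K] J K xx)))
        (LinearMap.prod
          ((mulTpow K s y (y - 2)).coprod
            ((mulTpow K t y (y - 2)).coprod (0 : J K 1 →ₗ[Polynomial K] J K y)))
          ((0 : J K s →ₗ[Polynomial K] J K 2).coprod
            ((mulTpow K t 2 0).coprod (mulTpow K 1 2 1))))) := by
  constructor
  · intro v
    show ((X : Polynomial K) ^ 2) • bigC K s t xx y v = 0
    exact part1 hts ht hyx hy v
  · show TripleIndecomposable (bigC K s t xx y)
    constructor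
    · refine Or.inl ⟨(qmk K s 1, 0, 0), 0, fun h => ?_⟩
      have h1 : qmk K s 1 = 0 := congrArg Prod.fst h
      obtain ⟨c, hc⟩ := qmk_eq_zero.mp h1
      have := congrArg (fun p => Polynomial.eval 0 p) hc
      simp [zero_pow (show s ≠ 0 by omega)] at this
    · intro F G hGC hFF hGG
      obtain ⟨a11, a21, a31, hF1⟩ := trip_decomp (F (qmk K s 1, 0, 0))
      obtain ⟨a12, a22, a32, hF2⟩ := trip_decomp (F (0, qmk K t 1, 0))
      obtain ⟨a13, a23, a33, hF3⟩ := trip_decomp (F (0, 0, qmk K 1 1))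
      obtain ⟨hT13, hT23, -⟩ := torsion_fact F 1 hF3 gen3_torsion
      have ha13_0 : a13.coeff 0 = 0 := by
        have h := coeff_eq_zero_of_dvd hT13 (show 1 < s by omega)
        rwa [cXe a13 0 (by omega)] at h
      have ha23_0 : a23.coeff 0 = 0 := by
        have h := coeff_eq_zero_of_dvd hT23 (show 1 < t by omega)
        rwa [cXe a23 0 (by omega)] at h
      have hFe3 := LinearMap.ext_iff.mp hFF (0, 0, qmk K 1 1)
      simp only [LinearMap.comp_apply] at hFe3
      rw [hF3, apply_reps F hF1 hF2 hF3, Prod.mk.injEq, Prod.mk.injEq] at hFe3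
      have hidem := qmk_coeff_eq (show 0 < 1 by omega) hFe3.2.2
      rw [coeff_add, coeff_add, mul_coeff_zero, mul_coeff_zero, mul_coeff_zero,
        ha13_0, ha23_0, zero_mul, zero_mul, zero_add, zero_add] at hidem
      have hcase : a33.coeff 0 = 0 ∨ a33.coeff 0 = 1 := by
        rcases mul_eq_zero.mp (show a33.coeff 0 * (a33.coeff 0 - 1) = 0 by
          linear_combination hidem) with h | h
        · exact Or.inl h
        · exact Or.inr (by linear_combination h)
      rcases hcase with h0 | h1
      · left
        refine main_zero hts ht hyx hy F G hGC hFF hGG ?_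
        intro r hr
        have h' : qmk K 1 r = qmk K 1 a33 := by rw [← hr, hF3]
        rw [qmk_coeff_eq (show 0 < 1 by omega) h', h0]
      · right
        have hGC' : (LinearMap.id - G) ∘ₗ bigC K s t xx y
            = bigC K s t xx y ∘ₗ (LinearMap.id - F) := by
          rw [LinearMap.sub_comp, LinearMap.comp_sub, LinearMap.id_comp,
            LinearMap.comp_id, hGC]
        have hFF' : (LinearMap.id - F) ∘ₗ (LinearMap.id - F) = LinearMap.id - F := by
          rw [LinearMap.comp_sub, LinearMap.comp_id, LinearMap.sub_comp,
            LinearMap.id_comp, hFF, sub_self, sub_zero]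
        have hGG' : (LinearMap.id - G) ∘ₗ (LinearMap.id - G) = LinearMap.id - G := by
          rw [LinearMap.comp_sub, LinearMap.comp_id, LinearMap.sub_comp,
            LinearMap.id_comp, hGG, sub_self, sub_zero]
        have hα' : ∀ r₀ : Polynomial K,
            (((LinearMap.id - F : (J K s × J K t × J K 1) →ₗ[Polynomial K]
                (J K s × J K t × J K 1))) ((0, 0, qmk K 1 1) : J K s × J K t × J K 1)).2.2
              = qmk K 1 r₀ → r₀.coeff 0 = 0 := by
          intro r hr
          have hval : (((LinearMap.id - F : (J K s × J K t × J K 1) →ₗ[Polynomial K]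
                (J K s × J K t × J K 1))) ((0, 0, qmk K 1 1) : J K s × J K t × J K 1)).2.2
              = qmk K 1 (1 - a33) := by
            rw [LinearMap.sub_apply, LinearMap.id_apply, hF3]
            show qmk K 1 1 - qmk K 1 a33 = qmk K 1 (1 - a33)
            rw [sub_eq_iff_eq_add, qmk_add]
            congr 1
            ring
          have h' : qmk K 1 r = qmk K 1 (1 - a33) := by rw [← hr, hval]
          rw [qmk_coeff_eq (show 0 < 1 by omega) h', coeff_sub, h1,
            Polynomial.coeff_one_zero, sub_self]
        obtain ⟨hFz, hGz⟩ := main_zero hts ht hyx hy (LinearMap.id - F)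
          (LinearMap.id - G) hGC' hFF' hGG' hα'
        exact ⟨(sub_eq_zero.mp hFz).symm, (sub_eq_zero.mp hGz).symm⟩
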